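/- For an infinite alphabet A, the full shift Σ_A with the topology generated by the generalized cylinder sets is compact. -/

import Mathlib

open Set Filter Topology

/-- Elements of the full shift `Σ_A`: `Option`-valued sequences that stay `none`
once they are `none` (so they are either everywhere-defined infinite sequences,
or finite words followed by `none`s; the empty word is the all-`none` sequence). -/
def IsWordFun {A : Type*} (x : ℕ → Option A) : Prop :=
  ∀ m n : ℕ, m ≤ n → x m = none → x n = none

/-- The full shift `Σ_A = A^ℕ ∪ {finite words over A}`. -/
def FullShift (A : Type*) : Type _ := {x : ℕ → Option A // IsWordFun x}

namespace FullShift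

variable {A B : Type*}

/-- The length of an element of the full shift, in `ℕ∞`. -/
noncomputable def len (x : FullShift A) : ℕ∞ :=
  sInf {n : ℕ∞ | ∃ m : ℕ, n = (m : ℕ∞) ∧ x.1 m = none}

/-- The shift map `σ`, deleting the first letter. -/
def shift (x : FullShift A) : FullShift A :=
  ⟨fun n => x.1 (n + 1), fun m n h hm => x.2 (m + 1) (n + 1) (by omega) hm⟩

/-- The empty word `∅`. -/
def emptyWord : FullShift A := ⟨fun _ => none, fun _ _ _ _ => rfl⟩

/-- The finite word determined by a list. -/
def word (l : List A) : FullShift A :=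
  ⟨fun n => l[n]?, by
    intro m n h hm
    rw [List.getElem?_eq_none_iff] at hm ⊢
    omega⟩

/-- The infinite sequence determined by a function `ℕ → A`. -/
def infSeq (g : ℕ → A) : FullShift A :=
  ⟨fun n => some (g n), by intro m n _ hm; simp at hm⟩

/-- Generalized cylinder set `Z(w, F)`: elements beginning with the finite word `w`
whose next letter, if any, does not lie in the finite set `F`. -/
def Cyl (w : List A) (F : Finset A) : Set (FullShift A) :=
  {y | (∀ i < w.length, y.1 i = w[i]?) ∧ ∀ a ∈ F, y.1 w.length ≠ some a}

/-- The topology on `Σ_A` generated by the generalized cylinder sets. -/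
instance : TopologicalSpace (FullShift A) :=
  TopologicalSpace.generateFrom {S | ∃ (w : List A) (F : Finset A), S = Cyl w F}

/-- A shift space: closed, shift-invariant, with the infinite-extension property. -/
def IsShiftSpace (Λ : Set (FullShift A)) : Prop :=
  IsClosed Λ ∧ (∀ x ∈ Λ, shift x ∈ Λ) ∧
    ∀ x ∈ Λ, ∀ n : ℕ, len x = (n : ℕ∞) →
      {a : A | ∃ z ∈ Λ, (∀ i < n, z.1 i = x.1 i) ∧ z.1 n = some a}.Infinite

/-- `u` occurs as a subblock of `x`. -/
def Occurs (u : List A) (x : FullShift A) : Prop :=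
  ∃ i : ℕ, ∀ j < u.length, x.1 (i + j) = u[j]?

/-- The infinite sequences avoiding every word in `Fb` as a subblock. -/
def XinfL (Fb : Set (List A)) : Set (FullShift A) :=
  {x | (∀ n, x.1 n ≠ none) ∧ ∀ u ∈ Fb, ¬ Occurs u x}

/-- The shift space `X_F` determined by the forbidden words `Fb`: the infinite
sequences avoiding `Fb`, together with the finite words `x` such that for
infinitely many `a ∈ A` some extension `x a y` lies in `X_F^inf`. -/
def XL (Fb : Set (List A)) : Set (FullShift A) :=
  XinfL Fb ∪ {x | ∃ n : ℕ, len x = (n : ℕ∞) ∧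
    {a : A | ∃ z ∈ XinfL Fb, (∀ i < n, z.1 i = x.1 i) ∧ z.1 n = some a}.Infinite}

/-- The infinite sequences all of whose length-`N` windows `v` satisfy `ft v = true`
(i.e. avoiding all length-`N` words `w` with `ft w = 0`). -/
def XinfT {N : ℕ} (ft : (Fin N → A) → Bool) : Set (FullShift A) :=
  {x | (∀ n, x.1 n ≠ none) ∧
    ∀ (i : ℕ) (v : Fin N → A), (∀ j : Fin N, x.1 (i + (j : ℕ)) = some (v j)) → ft v = true}

/-- The shift space `X_f` determined by forbidding the length-`N` words `w`
with `ft w = 0`. -/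
def XT {N : ℕ} (ft : (Fin N → A) → Bool) : Set (FullShift A) :=
  XinfT ft ∪ {x | ∃ n : ℕ, len x = (n : ℕ∞) ∧
    {a : A | ∃ z ∈ XinfT ft, (∀ i < n, z.1 i = x.1 i) ∧ z.1 n = some a}.Infinite}

/-- `Y` is an `M`-step shift space: determined by forbidden words of length `M + 1`,
equivalently by a function `g̃ : B^{M+1} → {0,1}`. -/
def IsStepShift (M : ℕ) (Y : Set (FullShift B)) : Prop :=
  ∃ gt : (Fin (M + 1) → B) → Bool, Y = XT gt

/-- `φ` is a conjugacy from `Λ` onto `Y`: bijective, continuous, shift-commuting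
and length-preserving. -/
def IsConjugacy (Λ : Set (FullShift A)) (Y : Set (FullShift B))
    (φ : FullShift A → FullShift B) : Prop :=
  Set.BijOn φ Λ Y ∧ ContinuousOn φ Λ ∧
    (∀ x ∈ Λ, φ (shift x) = shift (φ x)) ∧ ∀ x ∈ Λ, len (φ x) = len x

/-- `Λ` and `Y` are conjugate shift spaces. -/
def Conjugate (Λ : Set (FullShift A)) (Y : Set (FullShift B)) : Prop :=
  ∃ φ : FullShift A → FullShift B, IsConjugacy Λ Y φ

/-- The periodic sequence `(x_1 ⋯ x_M b)^∞` of period `M + 1`. -/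
def per (M : ℕ) (x : Fin M → A) (b : A) : ℕ → A :=
  fun n => if h : n % (M + 1) < M then x ⟨n % (M + 1), h⟩ else b

end FullShift

/-- The full shift `Σ_A` with the cylinder topology is compact. -/
theorem stmt1 {A : Type*} [Infinite A] : CompactSpace (FullShift A) := by
  rw [← isCompact_univ_iff, isCompact_iff_ultrafilter_le_nhds]
  intro f _
  classical
  have hnhds : ∀ x : FullShift A, (↑f : Filter (FullShift A)) ≤ 𝓝 x ↔
      ∀ s ∈ {s : Set (FullShift A) | x ∈ s ∧ ∃ w F, s = FullShift.Cyl w F}, s ∈ f := by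
    intro x
    rw [show (𝓝 x : Filter (FullShift A)) =
        ⨅ s ∈ {s : Set (FullShift A) | x ∈ s ∧
          ∃ (w : List A) (F : Finset A), s = FullShift.Cyl w F}, 𝓟 s from
      TopologicalSpace.nhds_generateFrom]
    simp only [le_iInf_iff, Filter.le_principal_iff]
    rfl
  by_cases h : ∀ n, ∃ a : A, {y : FullShift A | y.1 n = some a} ∈ f
  · choose a ha using h
    refine ⟨FullShift.infSeq a, trivial, (hnhds _).mpr ?_⟩
    rintro s ⟨hx, w, F, rfl⟩
    obtain ⟨hw, hF⟩ := hx
    have key : (⋂ i ∈ Finset.range (w.length + 1),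
        {y : FullShift A | y.1 i = some (a i)}) ∈ f :=
      (Filter.biInter_finset_mem _).mpr fun i _ => ha i
    refine Filter.mem_of_superset key ?_
    intro y hy
    simp only [Finset.mem_range, Set.mem_iInter, Set.mem_setOf_eq] at hy
    constructor
    · intro i hi
      rw [hy i (by omega), ← hw i hi]
      rfl
    · intro b hb
      rw [hy w.length (by omega)]
      exact fun hc => hF b hb (by rw [← hc]; rfl)
  · push_neg at h
    have h' : ∃ n, ∀ a : A, {y : FullShift A | y.1 n = some a} ∉ f := h
    set k := Nat.find h' with hkdef
    have hk : ∀ a : A, {y : FullShift A | y.1 k = some a} ∉ f := Nat.find_spec h'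
    have hlt : ∀ i, i < k → ∃ a : A, {y : FullShift A | y.1 i = some a} ∈ f := by
      intro i hi
      exact not_forall_not.mp (Nat.find_min h' hi)
    choose a' ha' using hlt
    have : Nonempty A := inferInstance
    set b : ℕ → A := fun i => if hi : i < k then a' i hi else Classical.arbitrary A with hbdef
    have hb : ∀ i < k, {y : FullShift A | y.1 i = some (b i)} ∈ f := by
      intro i hi; simpa [hbdef, hi] using ha' i hi
    set l : List A := List.ofFn (fun j : Fin k => b j) with hldef
    have hllen : l.length = k := List.length_ofFn
    have hx1 : ∀ i < k, (FullShift.word l).1 i = some (b i) := by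
      intro i hi
      show l[i]? = some (b i)
      rw [List.getElem?_eq_getElem (by omega)]
      simp [hldef, List.getElem_ofFn]
    have hx2 : ∀ i, k ≤ i → (FullShift.word l).1 i = none := by
      intro i hi
      show l[i]? = none
      rw [List.getElem?_eq_none_iff]
      omega
    refine ⟨FullShift.word l, trivial, (hnhds _).mpr ?_⟩
    rintro s ⟨hx, w, F, rfl⟩
    obtain ⟨hw, hF⟩ := hx
    have hwk : w.length ≤ k := by
      by_contra hc
      push_neg at hc
      have := hw k hc
      rw [hx2 k le_rfl, List.getElem?_eq_getElem (by omega)] at this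
      exact Option.some_ne_none _ this.symm
    have hwi : ∀ i < w.length, w[i]? = some (b i) := by
      intro i hi
      rw [← hw i hi, hx1 i (by omega)]
    have hbase : (⋂ i ∈ Finset.range w.length,
        {y : FullShift A | y.1 i = some (b i)}) ∈ f :=
      (Filter.biInter_finset_mem _).mpr fun i hi => hb i (by
        simp only [Finset.mem_range] at hi; omega)
    rcases lt_or_eq_of_le hwk with hcase | hcase
    · -- w.length < k
      have hbF : b w.length ∉ F := by
        intro hmem
        exact hF _ hmem (hx1 w.length hcase)
      have key : (⋂ i ∈ Finset.range w.length, {y : FullShift A | y.1 i = some (b i)})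
          ∩ {y : FullShift A | y.1 w.length = some (b w.length)} ∈ f :=
        Filter.inter_mem hbase (hb _ hcase)
      refine Filter.mem_of_superset key ?_
      rintro y ⟨hy1, hy2⟩
      simp only [Finset.mem_range, Set.mem_iInter, Set.mem_setOf_eq] at hy1 hy2
      refine ⟨fun i hi => by rw [hy1 i hi, hwi i hi], fun c hc hcontra => ?_⟩
      rw [hy2] at hcontra
      exact hbF (by rw [Option.some_inj.mp hcontra]; exact hc)
    · -- w.length = k
      have hG : {y : FullShift A | ∀ c ∈ F, y.1 k ≠ some c} ∈ f := by
        have hnot : (⋃ c ∈ (F : Set A), {y : FullShift A | y.1 k = some c}) ∉ f := by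
          rw [Ultrafilter.finite_biUnion_mem_iff F.finite_toSet]
          rintro ⟨c, -, hcmem⟩
          exact hk c hcmem
        have := Ultrafilter.compl_mem_iff_notMem.mpr hnot
        refine Filter.mem_of_superset this ?_
        intro y hy c hc hcontra
        exact hy (Set.mem_biUnion hc hcontra)
      have key := Filter.inter_mem hbase hG
      refine Filter.mem_of_superset key ?_
      rintro y ⟨hy1, hy2⟩
      simp only [Finset.mem_range, Set.mem_iInter, Set.mem_setOf_eq] at hy1
      refine ⟨fun i hi => by rw [hy1 i hi, hwi i hi], fun c hc => ?_⟩
      rw [hcase]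
      exact hy2 c hc
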